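/- Let R be a commutative ring, let f : ℕ⁺ → R, and let m, n be positive integers with m ∣ n. Then ∑_{d ∣ n} μ(n/d) · f(gcd(m,d)) equals (f ∗ μ)(n) = ∑_{d ∣ n} f(d) μ(n/d) if m = n, and equals 0 otherwise. Here μ is the number-theoretic Möbius function and ∗ denotes Dirichlet convolution. -/

import Mathlib

open Finset ArithmeticFunction
open scoped ArithmeticFunction.Moebius ArithmeticFunction.zeta

private lemma sum_moebius_divisors' (k : ℕ) :
    ∑ c ∈ k.divisors, (μ c : ℤ) = if k = 1 then 1 else 0 := by
  rw [← coe_mul_zeta_apply, moebius_mul_coe_zeta, one_apply]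

private lemma cesaro_inner {R : Type*} [CommRing R] (e k : ℕ) (he0 : 0 < e) (hk : 0 < k) :
    ∑ d ∈ (e * k).divisors.filter (fun d => e ∣ d), ((μ (e * k / d) : ℤ) : R) =
      if e = e * k then 1 else 0 := by
  have h1 : ∑ d ∈ (e * k).divisors.filter (fun d => e ∣ d), ((μ (e * k / d) : ℤ) : R)
      = ∑ d' ∈ k.divisors, ((μ (k / d') : ℤ) : R) := by
    refine Finset.sum_nbij' (i := fun d => d / e) (j := fun d' => e * d') ?_ ?_ ?_ ?_ ?_
    · intro d hd
      simp only [mem_filter, Nat.mem_divisors] at hd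
      obtain ⟨⟨hdn, hne⟩, c, rfl⟩ := hd
      show e * c / e ∈ k.divisors
      rw [Nat.mul_div_cancel_left _ he0]
      exact Nat.mem_divisors.2 ⟨(mul_dvd_mul_iff_left he0.ne').1 hdn, hk.ne'⟩
    · intro d' hd'
      simp only [Nat.mem_divisors] at hd'
      refine mem_filter.2 ⟨Nat.mem_divisors.2 ⟨mul_dvd_mul_left e hd'.1, (Nat.mul_pos he0 hk).ne'⟩,
        dvd_mul_right e d'⟩
    · intro d hd
      simp only [mem_filter] at hd
      exact Nat.mul_div_cancel' hd.2
    · intro d' _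
      exact Nat.mul_div_cancel_left _ he0
    · intro d hd
      simp only [mem_filter, Nat.mem_divisors] at hd
      obtain ⟨⟨hdn, hne⟩, c, rfl⟩ := hd
      show ((μ (e * k / (e * c)) : ℤ) : R) = ((μ (k / (e * c / e)) : ℤ) : R)
      rw [Nat.mul_div_cancel_left _ he0, Nat.mul_div_mul_left _ _ he0]
  rw [h1, ← Int.cast_sum, Nat.sum_div_divisors k (fun c => (μ c : ℤ)), sum_moebius_divisors']
  have : (e = e * k) ↔ (k = 1) := by
    constructor
    · intro h; exact (Nat.mul_eq_left he0.ne').1 h.symm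
    · rintro rfl; simp
  simp only [this]
  split_ifs <;> simp

theorem cesaro_lemma {R : Type*} [CommRing R] (f : ℕ → R) (m n : ℕ)
    (hm : 0 < m) (hn : 0 < n) (hmn : m ∣ n) :
    ∑ d ∈ n.divisors, ((ArithmeticFunction.moebius (n / d) : ℤ) : R) * f (Nat.gcd m d) =
      if m = n then ∑ d ∈ n.divisors, f d * ((ArithmeticFunction.moebius (n / d) : ℤ) : R)
      else 0 := by
  set F : ArithmeticFunction R := ⟨fun k => if k = 0 then 0 else f k, if_pos rfl⟩ with hF
  set g : ArithmeticFunction R := F * ((μ : ArithmeticFunction ℤ) : ArithmeticFunction R)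
    with hgdef
  have hg : g * ((ζ : ArithmeticFunction ℕ) : ArithmeticFunction R) = F := by
    rw [hgdef, mul_assoc, coe_moebius_mul_coe_zeta, mul_one]
  have hinv : ∀ k : ℕ, k ≠ 0 → f k = ∑ e ∈ k.divisors, g e := by
    intro k hk
    have h := coe_mul_zeta_apply (R := R) (f := g) (x := k)
    rw [hg] at h
    simp only [hF, ArithmeticFunction.coe_mk, hk, if_neg] at h
    exact h
  have hgn : g n = ∑ d ∈ n.divisors, f d * ((μ (n / d) : ℤ) : R) := by
    rw [hgdef, mul_apply,
      Nat.sum_divisorsAntidiagonal (f := fun a b => F a * ((μ : ArithmeticFunction ℤ) :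
        ArithmeticFunction R) b)]
    refine Finset.sum_congr rfl fun d hd => ?_
    have hd0 : d ≠ 0 := (Nat.pos_of_mem_divisors hd).ne'
    simp [hF, hd0, intCoe_apply]
  have step1 : ∀ d ∈ n.divisors, f (Nat.gcd m d) = ∑ e ∈ m.divisors.filter (· ∣ d), g e := by
    intro d hd
    rw [hinv _ (Nat.gcd_pos_of_pos_left d hm).ne']
    congr 1
    ext e
    simp only [Nat.mem_divisors, mem_filter, Nat.dvd_gcd_iff]
    constructor
    · rintro ⟨⟨h1, h2⟩, _⟩; exact ⟨⟨h1, hm.ne'⟩, h2⟩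
    · rintro ⟨⟨h1, _⟩, h2⟩; exact ⟨⟨h1, h2⟩, (Nat.gcd_pos_of_pos_left d hm).ne'⟩
  calc ∑ d ∈ n.divisors, ((μ (n / d) : ℤ) : R) * f (Nat.gcd m d)
      = ∑ d ∈ n.divisors, ∑ e ∈ m.divisors.filter (· ∣ d), ((μ (n / d) : ℤ) : R) * g e := by
        refine Finset.sum_congr rfl fun d hd => ?_
        rw [step1 d hd, Finset.mul_sum]
    _ = ∑ d ∈ n.divisors, ∑ e ∈ m.divisors, if e ∣ d then ((μ (n / d) : ℤ) : R) * g e else 0 := by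
        refine Finset.sum_congr rfl fun d _ => ?_
        rw [Finset.sum_filter]
    _ = ∑ e ∈ m.divisors, ∑ d ∈ n.divisors, if e ∣ d then ((μ (n / d) : ℤ) : R) * g e else 0 :=
        Finset.sum_comm
    _ = ∑ e ∈ m.divisors, (∑ d ∈ n.divisors.filter (fun d => e ∣ d), ((μ (n / d) : ℤ) : R)) * g e := by
        refine Finset.sum_congr rfl fun e _ => ?_
        rw [← Finset.sum_filter, Finset.sum_mul]
    _ = ∑ e ∈ m.divisors, (if e = n then 1 else 0) * g e := by
        refine Finset.sum_congr rfl fun e he => ?_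
        have hen : e ∣ n := (Nat.dvd_of_mem_divisors he).trans hmn
        obtain ⟨k, rfl⟩ := hen
        have he0 : 0 < e := Nat.pos_of_mem_divisors he
        have hk : 0 < k := by
          rcases Nat.eq_zero_or_pos k with h | h
          · subst h; simp at hn
          · exact h
        rw [cesaro_inner e k he0 hk]
    _ = if m = n then ∑ d ∈ n.divisors, f d * ((μ (n / d) : ℤ) : R) else 0 := by
        simp only [ite_mul, one_mul, zero_mul]
        rw [Finset.sum_ite_eq' m.divisors n g]
        split_ifs with h1 h2 h2
        · exact hgn
        · exact absurd (Nat.dvd_antisymm hmn (Nat.dvd_of_mem_divisors h1)) h2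
        · exact absurd (Nat.mem_divisors.2 ⟨h2 ▸ dvd_rfl, hm.ne'⟩) h1
        · rfl
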